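/- arXiv:1205.2911 — 4 statements merged into one kernel-verified Lean document; each statement's English description precedes it below -/
import Mathlib

section
/- Let S be a symmetric real n×n matrix with strictly positive diagonal entries and let λ ≥ 0. Then there exists a minimizer Θ̂ of the graphical lasso objective f over the set of positive definite symmetric real n×n matrices such that Θ̂ᵢⱼ = 0 for all i ≠ j if and only if |Sᵢⱼ| ≤ λ for all i ≠ j. -/
open Matrix

/-- The graphical lasso objective:
`f(Θ) = trace(S·Θ) − log det Θ + λ·∑_{i≠j} |Θᵢⱼ|`. -/
noncomputable def glassoObj {n : ℕ} (S : Matrix (Fin n) (Fin n) ℝ) (lam : ℝ)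
    (Θ : Matrix (Fin n) (Fin n) ℝ) : ℝ :=
  (S * Θ).trace - Real.log Θ.det
    + lam * ∑ i, ∑ j, if i ≠ j then |Θ i j| else 0

private lemma trace_eq_sum_eigs {n : ℕ} {A : Matrix (Fin n) (Fin n) ℝ} (hA : A.IsHermitian) :
    A.trace = ∑ i, hA.eigenvalues i := by
  nth_rewrite 1 [hA.spectral_theorem]
  rw [Unitary.conjStarAlgAut_apply, Matrix.trace_mul_comm, ← Matrix.mul_assoc, Unitary.coe_star_mul_self, Matrix.one_mul,
    Matrix.trace_diagonal]
  simp

private lemma log_det_le_trace {n : ℕ} {A : Matrix (Fin n) (Fin n) ℝ} (hA : A.PosDef) :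
    Real.log A.det ≤ A.trace - n := by
  have hdet : A.det = ∏ i, hA.isHermitian.eigenvalues i := by
    simpa using hA.isHermitian.det_eq_prod_eigenvalues
  have hpos := hA.eigenvalues_pos
  rw [hdet, Real.log_prod (fun i _ => (hpos i).ne'), trace_eq_sum_eigs hA.isHermitian]
  have : ∑ i, Real.log (hA.isHermitian.eigenvalues i)
      ≤ ∑ i : Fin n, (hA.isHermitian.eigenvalues i - 1) :=
    Finset.sum_le_sum fun i _ => Real.log_le_sub_one_of_pos (hpos i)
  rw [Finset.sum_sub_distrib] at this
  simpa using this

private lemma posdef_conj {n : ℕ} {Θ B : Matrix (Fin n) (Fin n) ℝ} (hΘ : Θ.PosDef)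
    (hB : ∀ x : Fin n → ℝ, x ≠ 0 → B *ᵥ x ≠ 0) : (Bᴴ * Θ * B).PosDef :=
  Matrix.PosDef.of_dotProduct_mulVec_pos (Matrix.isHermitian_conjTranspose_mul_mul B hΘ.1) fun x hx => by
    simpa only [star_mulVec, dotProduct_mulVec, vecMul_vecMul] using hΘ.dotProduct_mulVec_pos (hB x hx)

private lemma glasso_diag {n : ℕ} (S : Matrix (Fin n) (Fin n) ℝ) (lam : ℝ)
    {e : Fin n → ℝ} (he : ∀ i, e i ≠ 0) :
    glassoObj S lam (Matrix.diagonal e)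
      = (∑ i, S i i * e i) - ∑ i, Real.log (e i) := by
  unfold glassoObj
  rw [Matrix.det_diagonal, Real.log_prod (fun i _ => he i)]
  have h1 : (S * Matrix.diagonal e).trace = ∑ i, S i i * e i := by
    simp [Matrix.trace, Matrix.diag, Matrix.mul_diagonal]
  have h2 : (∑ i, ∑ j, if i ≠ j then |Matrix.diagonal e i j| else 0) = (0:ℝ) := by
    refine Finset.sum_eq_zero fun i _ => Finset.sum_eq_zero fun j _ => ?_
    by_cases h : i = j <;> simp [h, Matrix.diagonal_apply_ne]
  rw [h1, h2]
  ring

private lemma glasso_lower {n : ℕ} (S : Matrix (Fin n) (Fin n) ℝ)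
    (hSdiag : ∀ i, 0 < S i i) {lam : ℝ} (hlam : 0 ≤ lam)
    (hle : ∀ i j, i ≠ j → |S i j| ≤ lam)
    {Θ : Matrix (Fin n) (Fin n) ℝ} (hΘ : Θ.PosDef) :
    (∑ i, (1 + Real.log (S i i))) ≤ glassoObj S lam Θ := by
  classical
  set B := Matrix.diagonal (fun i => Real.sqrt (S i i)) with hBdef
  have hBpos : ∀ i, 0 < Real.sqrt (S i i) := fun i => Real.sqrt_pos.2 (hSdiag i)
  have hBH : Bᴴ = B := by
    rw [hBdef, Matrix.diagonal_conjTranspose]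
    congr 1
  have hinj : ∀ x : Fin n → ℝ, x ≠ 0 → B *ᵥ x ≠ 0 := by
    intro x hx h
    apply hx
    funext a
    have := congrFun h a
    simp only [hBdef, Matrix.mulVec_diagonal, Pi.zero_apply] at this
    rcases mul_eq_zero.1 this with h' | h'
    · exact absurd h' (hBpos a).ne'
    · exact h'
  have hA : (B * Θ * B).PosDef := by
    have := posdef_conj hΘ hinj
    rwa [hBH] at this
  have htr : (B * Θ * B).trace = ∑ i, S i i * Θ i i := by
    refine Finset.sum_congr rfl fun i _ => ?_
    show (B * Θ * B) i i = S i i * Θ i i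
    rw [hBdef, Matrix.mul_diagonal, Matrix.diagonal_mul]
    rw [show Real.sqrt (S i i) * Θ i i * Real.sqrt (S i i)
        = (Real.sqrt (S i i) * Real.sqrt (S i i)) * Θ i i by ring,
      Real.mul_self_sqrt (hSdiag i).le]
  have hdet : (B * Θ * B).det = (∏ i, S i i) * Θ.det := by
    rw [Matrix.det_mul, Matrix.det_mul, hBdef, Matrix.det_diagonal]
    rw [show (∏ i, Real.sqrt (S i i)) * Θ.det * ∏ i, Real.sqrt (S i i)
        = ((∏ i, Real.sqrt (S i i)) * ∏ i, Real.sqrt (S i i)) * Θ.det by ring,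
      ← Finset.prod_mul_distrib]
    congr 1
    exact Finset.prod_congr rfl fun i _ => Real.mul_self_sqrt (hSdiag i).le
  -- log det bound
  have hlog := log_det_le_trace hA
  rw [hdet, htr] at hlog
  have hprod : (0:ℝ) < ∏ i, S i i := Finset.prod_pos fun i _ => hSdiag i
  rw [Real.log_mul hprod.ne' hΘ.det_pos.ne',
    Real.log_prod (fun i _ => (hSdiag i).ne')] at hlog
  -- trace + penalty bound
  have hbound : ∑ i, S i i * Θ i i
      ≤ (S * Θ).trace + lam * ∑ i, ∑ j, if i ≠ j then |Θ i j| else 0 := by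
    have htr2 : (S * Θ).trace = ∑ i, ∑ j, S i j * Θ j i := by
      simp [Matrix.trace, Matrix.diag, Matrix.mul_apply]
    rw [htr2, Finset.mul_sum]
    rw [show (∑ i, ∑ j, S i j * Θ j i) + ∑ i, lam * ∑ j, (if i ≠ j then |Θ i j| else 0)
        = ∑ i, ∑ j, (S i j * Θ j i + lam * (if i ≠ j then |Θ i j| else 0)) by
      rw [← Finset.sum_add_distrib]
      refine Finset.sum_congr rfl fun i _ => ?_
      rw [Finset.mul_sum, ← Finset.sum_add_distrib]]
    have hdiag : ∑ i, S i i * Θ i i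
        = ∑ i, ∑ j, (if i = j then S i j * Θ j i else 0) := by
      refine Finset.sum_congr rfl fun i _ => ?_
      rw [Finset.sum_ite_eq]
      simp
    rw [hdiag]
    refine Finset.sum_le_sum fun i _ => Finset.sum_le_sum fun j _ => ?_
    by_cases h : i = j
    · subst h
      simp
    · have hsymm : Θ j i = Θ i j := by
        have := hΘ.1.apply i j
        simpa using this
      have h1 : |S i j * Θ i j| ≤ lam * |Θ i j| := by
        rw [abs_mul]
        exact mul_le_mul_of_nonneg_right (hle i j h) (abs_nonneg _)
      have h2 := neg_abs_le (S i j * Θ i j)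
      rw [if_neg h, if_pos h, hsymm]
      nlinarith [abs_nonneg (Θ i j)]
  have hcard : (∑ i, (1 + Real.log (S i i))) = n + ∑ i, Real.log (S i i) := by
    rw [Finset.sum_add_distrib]
    simp
  unfold glassoObj
  rw [hcard]
  linarith

private lemma diag_entry_of_min {n : ℕ} (S : Matrix (Fin n) (Fin n) ℝ)
    (hSdiag : ∀ i, 0 < S i i) (lam : ℝ)
    {d : Fin n → ℝ} (hd : ∀ a, 0 < d a)
    (hmin : ∀ Θ : Matrix (Fin n) (Fin n) ℝ, Θ.PosDef →
      glassoObj S lam (Matrix.diagonal d) ≤ glassoObj S lam Θ)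
    (k : Fin n) : d k = (S k k)⁻¹ := by
  classical
  set e : Fin n → ℝ := Function.update d k (S k k)⁻¹ with hedef
  have he : ∀ a, 0 < e a := by
    intro a
    by_cases h : a = k
    · subst h; rw [hedef, Function.update_self]; exact inv_pos.2 (hSdiag a)
    · rw [hedef, Function.update_of_ne h]; exact hd a
  have hkey := hmin (Matrix.diagonal e) (Matrix.PosDef.diagonal he)
  rw [glasso_diag S lam (fun a => (hd a).ne'), glasso_diag S lam (fun a => (he a).ne')] at hkey
  have hd1 : (∑ a, S a a * d a)
      = (∑ a ∈ Finset.univ.erase k, S a a * d a) + S k k * d k := by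
    rw [Finset.sum_erase_add]
    exact Finset.mem_univ k
  have he1 : (∑ a, S a a * e a)
      = (∑ a ∈ Finset.univ.erase k, S a a * d a) + S k k * (S k k)⁻¹ := by
    rw [← Finset.sum_erase_add _ _ (Finset.mem_univ k), hedef, Function.update_self]
    congr 1
    exact Finset.sum_congr rfl fun a ha =>
      by rw [Function.update_of_ne (Finset.ne_of_mem_erase ha)]
  have hd2 : (∑ a, Real.log (d a))
      = (∑ a ∈ Finset.univ.erase k, Real.log (d a)) + Real.log (d k) := by
    rw [Finset.sum_erase_add]
    exact Finset.mem_univ k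
  have he2 : (∑ a, Real.log (e a))
      = (∑ a ∈ Finset.univ.erase k, Real.log (d a)) + Real.log ((S k k)⁻¹) := by
    rw [← Finset.sum_erase_add _ _ (Finset.mem_univ k), hedef, Function.update_self]
    congr 1
    exact Finset.sum_congr rfl fun a ha =>
      by rw [Function.update_of_ne (Finset.ne_of_mem_erase ha)]
  rw [hd1, he1, hd2, he2] at hkey
  have hkey2 : S k k * d k - Real.log (d k)
      ≤ S k k * (S k k)⁻¹ - Real.log ((S k k)⁻¹) := by linarith
  rw [mul_inv_cancel₀ (hSdiag k).ne', Real.log_inv] at hkey2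
  set x : ℝ := S k k * d k with hxdef
  have hx : 0 < x := mul_pos (hSdiag k) (hd k)
  have hlogd : Real.log (d k) = Real.log x - Real.log (S k k) := by
    rw [hxdef, Real.log_mul (hSdiag k).ne' (hd k).ne']
    ring
  rw [hlogd] at hkey2
  have hx1 : x = 1 := by
    by_contra hne
    have := Real.log_lt_sub_one_of_pos hx hne
    linarith
  have h' : S k k * d k = 1 := hxdef ▸ hx1
  exact (inv_eq_of_mul_eq_one_right h').symm

private lemma glasso_numeric {c e t L : ℝ} (hc : 0 < c) (he : 0 < e) (ht : 0 < t)
    (htc2 : t * (2 * c ^ 2) = e) (hlb : 1 - (1 + t * c)⁻¹ ≤ L)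
    (hstep : 0 ≤ t * (c - e) - L) : False := by
  have h1tc : (0:ℝ) < 1 + t * c := by nlinarith [mul_pos ht hc]
  have hq : (1 + t * c) * (1 + t * c)⁻¹ = 1 := mul_inv_cancel₀ h1tc.ne'
  have hP : 0 ≤ t * (c - e) - 1 + (1 + t * c)⁻¹ := by linarith
  have h5 : 0 ≤ (t * (c - e) - 1 + (1 + t * c)⁻¹) * (1 + t * c) :=
    mul_nonneg hP h1tc.le
  have htc2t : t * t * (2 * c ^ 2) = t * e := by rw [← htc2]; ring
  nlinarith [h5, hq, htc2t, mul_pos ht he, mul_pos (mul_pos ht ht) (mul_pos hc he),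
    mul_pos ht hc]

/-- There exists a minimizer of the graphical lasso objective over positive
definite symmetric matrices which is diagonal (all off-diagonal entries zero)
if and only if `|Sᵢⱼ| ≤ λ` for all `i ≠ j`. -/
theorem glasso_diagonal_minimizer_iff {n : ℕ}
    (S : Matrix (Fin n) (Fin n) ℝ) (hSsym : S.IsSymm)
    (hSdiag : ∀ i, 0 < S i i) (lam : ℝ) (hlam : 0 ≤ lam) :
    (∃ Θhat : Matrix (Fin n) (Fin n) ℝ, Θhat.PosDef ∧
        IsMinOn (glassoObj S lam) {Θ : Matrix (Fin n) (Fin n) ℝ | Θ.PosDef} Θhat ∧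
        ∀ i j, i ≠ j → Θhat i j = 0)
      ↔ (∀ i j, i ≠ j → |S i j| ≤ lam) := by
  classical
  constructor
  · rintro ⟨Θhat, hPD, hmin, hoff⟩ i j hij
    by_contra hcon
    push_neg at hcon
    -- Θhat is diagonal with positive entries
    set d : Fin n → ℝ := fun a => Θhat a a with hddef
    have hd : ∀ a, 0 < d a := by
      intro a
      have h0 : (Pi.single a 1 : Fin n → ℝ) ≠ 0 := by
        intro h
        have := congrFun h a
        simp at this
      have := hPD.dotProduct_mulVec_pos h0
      simpa [dotProduct, Matrix.mulVec_single, Pi.single_apply, ite_mul, mul_ite,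
        Finset.sum_ite_eq] using this
    have hΘd : Θhat = Matrix.diagonal d := by
      ext a b
      by_cases h : a = b
      · subst h
        rw [Matrix.diagonal_apply_eq]
      · rw [hoff a b h, Matrix.diagonal_apply_ne _ h]
    have hmin' : ∀ Θ : Matrix (Fin n) (Fin n) ℝ, Θ.PosDef →
        glassoObj S lam (Matrix.diagonal d) ≤ glassoObj S lam Θ := by
      intro Θ hΘ
      rw [← hΘd]
      exact isMinOn_iff.1 hmin Θ hΘ
    have hdk : ∀ k, d k = (S k k)⁻¹ := diag_entry_of_min S hSdiag lam hd hmin'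
    -- set up the perturbation
    set c : ℝ := S i i + S j j with hcdef
    have hc : 0 < c := add_pos (hSdiag i) (hSdiag j)
    set ε : ℝ := 2 * (|S i j| - lam) with hεdef
    have hε : 0 < ε := by rw [hεdef]; linarith
    obtain ⟨t, ht, htc2⟩ : ∃ t : ℝ, 0 < t ∧ t * (2 * c ^ 2) = ε :=
      ⟨ε / (2 * c ^ 2), div_pos hε (by positivity), div_mul_cancel₀ _ (by positivity)⟩
    set s : ℝ := if 0 ≤ S i j then -1 else 1 with hsdef
    have hss : s * s = 1 := by
      rw [hsdef]; by_cases h : 0 ≤ S i j <;> simp [h]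
    have habs : |s| = 1 := by
      rw [hsdef]; by_cases h : 0 ≤ S i j <;> simp [h]
    have hsS : s * S i j = -|S i j| := by
      rw [hsdef]
      by_cases h : 0 ≤ S i j
      · rw [if_pos h, abs_of_nonneg h]; ring
      · rw [if_neg h, abs_of_neg (lt_of_not_ge h)]; ring
    set v : Fin n → ℝ := fun a => (if a = i then (1:ℝ) else 0) + (if a = j then s else 0)
      with hvdef
    have hsum : ∀ g : Fin n → ℝ, (∑ b, g b * v b) = g i + g j * s := by
      intro g
      simp [hvdef, mul_add, mul_ite, mul_zero, mul_one, Finset.sum_add_distrib,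
        Finset.sum_ite_eq']
    have hvi : v i = 1 := by simp [hvdef, hij]
    have hvj : v j = s := by simp [hvdef, Ne.symm hij]
    have hv0 : ∀ a, a ≠ i → a ≠ j → v a = 0 := by intro a h1 h2; simp [hvdef, h1, h2]
    set w : Fin n → ℝ := fun a => Real.sqrt t * v a with hwdef
    set M : Matrix (Fin n) (Fin n) ℝ := Matrix.replicateCol Unit w * Matrix.replicateRow Unit w with hMdef
    have hMab : ∀ a b, M a b = t * (v a * v b) := by
      intro a b
      rw [hMdef]
      rw [Matrix.mul_apply]
      simp only [Matrix.replicateCol_apply, Matrix.replicateRow_apply, Finset.univ_unique, Finset.sum_singleton]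
      rw [hwdef]
      rw [show Real.sqrt t * v a * (Real.sqrt t * v b)
          = (Real.sqrt t * Real.sqrt t) * (v a * v b) by ring, Real.mul_self_sqrt ht.le]
    have hMpsd : M.PosSemidef := by
      have := Matrix.posSemidef_self_mul_conjTranspose (Matrix.replicateCol Unit w)
      rwa [Matrix.conjTranspose_replicateCol, show star w = w from star_trivial w, ← hMdef] at this
    have hΘt : (Matrix.diagonal d + M).PosDef :=
      (Matrix.PosDef.diagonal hd).add_posSemidef hMpsd
    -- trace of S * M
    have htrM : (S * M).trace = t * (S i i + s * S i j + (S j i + s * S j j) * s) := by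
      have h1 : (S * M).trace = ∑ a, ∑ b, S a b * M b a := by
        simp [Matrix.trace, Matrix.diag, Matrix.mul_apply]
      rw [h1]
      have h2 : ∀ a, (∑ b, S a b * M b a) = t * v a * (S a i + S a j * s) := by
        intro a
        rw [show (∑ b, S a b * M b a) = ∑ b, (t * v a * S a b) * v b from
          Finset.sum_congr rfl fun b _ => by rw [hMab]; ring]
        rw [hsum (fun b => t * v a * S a b)]
        ring
      rw [Finset.sum_congr rfl fun a _ => h2 a]
      rw [show (∑ a, t * v a * (S a i + S a j * s))
          = ∑ a, (t * (S a i + S a j * s)) * v a from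
        Finset.sum_congr rfl fun a _ => by ring]
      rw [hsum (fun a => t * (S a i + S a j * s))]
      ring
    have htrM' : (S * M).trace = t * (c - 2 * |S i j|) := by
      rw [htrM, hSsym.apply i j, hcdef]
      linear_combination 2 * t * hsS + t * (S j j) * hss
    -- penalty
    have hFab : ∀ a b : Fin n, a ≠ b → (Matrix.diagonal d + M) a b = t * (v a * v b) := by
      intro a b hab
      rw [Matrix.add_apply, Matrix.diagonal_apply_ne _ hab, hMab, zero_add]
    have hts : |t * s| = t := by
      rw [abs_mul, habs, abs_of_pos ht, mul_one]
    have hrow : ∀ a : Fin n, (∑ b, (if a ≠ b then |(Matrix.diagonal d + M) a b| else 0))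
        = (if a = i then t else 0) + (if a = j then t else 0) := by
      intro a
      by_cases hai : a = i
      · rw [if_pos hai, if_neg (fun h : a = j => hij (hai.symm.trans h)), add_zero]
        have hpt : ∀ b : Fin n, (if a ≠ b then |(Matrix.diagonal d + M) a b| else 0)
            = (if b = j then t else 0) := by
          intro b
          by_cases hbj : b = j
          · have hne : a ≠ b := fun h => hij ((hai.symm.trans h).trans hbj)
            rw [if_pos hbj, if_pos hne, hFab a b hne, hai, hbj, hvi, hvj]
            rw [show t * (1 * s) = t * s by ring, hts]
          · rw [if_neg hbj]
            by_cases hbab : a = b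
            · rw [if_neg (fun h => h hbab)]
            · rw [if_pos hbab, hFab a b hbab,
                hv0 b (fun h => hbab (hai.trans h.symm)) hbj]
              simp
        rw [Finset.sum_congr rfl fun b _ => hpt b]
        simp [Finset.sum_ite_eq']
      · by_cases haj : a = j
        · rw [if_neg hai, if_pos haj, zero_add]
          have hpt : ∀ b : Fin n, (if a ≠ b then |(Matrix.diagonal d + M) a b| else 0)
              = (if b = i then t else 0) := by
            intro b
            by_cases hbi : b = i
            · have hne : a ≠ b := fun h => hai (h.trans hbi)
              rw [if_pos hbi, if_pos hne, hFab a b hne, haj, hbi, hvi, hvj]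
              rw [show t * (s * 1) = t * s by ring, hts]
            · rw [if_neg hbi]
              by_cases hbab : a = b
              · rw [if_neg (fun h => h hbab)]
              · rw [if_pos hbab, hFab a b hbab,
                  hv0 b hbi (fun h => hbab (haj.trans h.symm))]
                simp
          rw [Finset.sum_congr rfl fun b _ => hpt b]
          simp [Finset.sum_ite_eq']
        · rw [if_neg hai, if_neg haj, add_zero]
          refine Finset.sum_eq_zero fun b _ => ?_
          by_cases hbab : a = b
          · rw [if_neg (fun h => h hbab)]
          · rw [if_pos hbab, hFab a b hbab, hv0 a hai haj]
            simp
    have hpen : (∑ a, ∑ b, if a ≠ b then |(Matrix.diagonal d + M) a b| else 0) = 2 * t := by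
      rw [Finset.sum_congr rfl fun a _ => hrow a, Finset.sum_add_distrib,
        Finset.sum_ite_eq' Finset.univ i (fun _ => t),
        Finset.sum_ite_eq' Finset.univ j (fun _ => t)]
      simp
      ring
    -- determinant
    have hdu : IsUnit (Matrix.diagonal d).det := by
      rw [Matrix.det_diagonal]
      exact (Finset.prod_pos fun a _ => hd a).ne'.isUnit
    have hdinv : (Matrix.diagonal d)⁻¹ = Matrix.diagonal (fun a => (d a)⁻¹) :=
      Matrix.inv_eq_right_inv (by
        rw [Matrix.diagonal_mul_diagonal,
          show (fun i => d i * (d i)⁻¹) = fun _ : Fin n => (1:ℝ) from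
            funext fun a => mul_inv_cancel₀ (hd a).ne',
          Matrix.diagonal_one])
    have hdet : (Matrix.diagonal d + M).det
        = (∏ a, d a) * (1 + t * ((d i)⁻¹ + (d j)⁻¹ * s * s)) := by
      rw [hMdef, Matrix.det_add_replicateCol_mul_replicateRow hdu w w, Matrix.det_diagonal, Matrix.det_unique]
      congr 1
      rw [Matrix.add_apply, Matrix.one_apply_eq]
      congr 1
      rw [hdinv, Matrix.mul_apply]
      have hentry : ∀ a, (Matrix.replicateRow Unit w * Matrix.diagonal fun a => (d a)⁻¹) default a
          * Matrix.replicateCol Unit w a default = (t * (d a)⁻¹ * v a) * v a := by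
        intro a
        rw [Matrix.mul_diagonal, Matrix.replicateRow_apply, Matrix.replicateCol_apply, hwdef]
        rw [show Real.sqrt t * v a * (d a)⁻¹ * (Real.sqrt t * v a)
            = (Real.sqrt t * Real.sqrt t) * ((d a)⁻¹ * v a * v a) by ring,
          Real.mul_self_sqrt ht.le]
        ring
      rw [Finset.sum_congr rfl fun a _ => hentry a, hsum (fun a => t * (d a)⁻¹ * v a), hvi, hvj]
      ring
    have hdet' : (Matrix.diagonal d + M).det = (∏ a, d a) * (1 + t * c) := by
      rw [hdet, hdk i, hdk j, inv_inv, inv_inv, hcdef]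
      linear_combination ((∏ a, d a) * t * S j j) * hss
    have h1tc : (0:ℝ) < 1 + t * c := by nlinarith [mul_pos ht hc]
    have hprodd : (0:ℝ) < ∏ a, d a := Finset.prod_pos fun a _ => hd a
    -- final comparison
    have hfin := hmin' (Matrix.diagonal d + M) hΘt
    unfold glassoObj at hfin
    rw [Matrix.mul_add, Matrix.trace_add, htrM', hdet', hpen,
      Real.log_mul hprodd.ne' h1tc.ne', Matrix.det_diagonal] at hfin
    have htrd : (S * Matrix.diagonal d).trace = ∑ a, S a a * d a := by
      simp [Matrix.trace, Matrix.diag, Matrix.mul_diagonal]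
    have hlogd : Real.log (∏ a, d a) = ∑ a, Real.log (d a) :=
      Real.log_prod (fun a _ => (hd a).ne')
    have hpend : (∑ a, ∑ b, if a ≠ b then |Matrix.diagonal d a b| else 0) = (0:ℝ) := by
      refine Finset.sum_eq_zero fun a _ => Finset.sum_eq_zero fun b _ => ?_
      by_cases h : a = b <;> simp [h, Matrix.diagonal_apply_ne]
    rw [hpend] at hfin
    -- now numeric contradiction
    have hstep : 0 ≤ t * (c - 2 * |S i j|) - Real.log (1 + t * c) + lam * (2 * t) := by
      linarith
    have hce : t * (c - 2 * |S i j|) + lam * (2 * t) = t * (c - ε) := by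
      rw [hεdef]; ring
    have hstep2 : 0 ≤ t * (c - ε) - Real.log (1 + t * c) := by linarith
    have hinvpos : (0:ℝ) < (1 + t * c)⁻¹ := inv_pos.2 h1tc
    have hlb : 1 - (1 + t * c)⁻¹ ≤ Real.log (1 + t * c) := by
      have h := Real.log_le_sub_one_of_pos hinvpos
      rw [Real.log_inv] at h
      linarith
    exact glasso_numeric hc hε ht htc2 hlb hstep2
  · intro h
    refine ⟨Matrix.diagonal (fun i => (S i i)⁻¹),
      Matrix.PosDef.diagonal (fun i => inv_pos.2 (hSdiag i)), ?_,
      fun i j hij => Matrix.diagonal_apply_ne _ hij⟩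
    rw [isMinOn_iff]
    intro Θ hΘ
    rw [glasso_diag S lam (fun i => (inv_pos.2 (hSdiag i)).ne')]
    have hval : (∑ i, S i i * (S i i)⁻¹) - (∑ i, Real.log ((S i i)⁻¹))
        = ∑ i, (1 + Real.log (S i i)) := by
      rw [← Finset.sum_sub_distrib]
      refine Finset.sum_congr rfl fun i _ => ?_
      rw [mul_inv_cancel₀ (hSdiag i).ne', Real.log_inv]
      ring
    rw [hval]
    exact glasso_lower S hSdiag hlam h hΘ
end

section
/- Let S be a symmetric real n×n matrix with strictly positive diagonal entries, let λ ≥ 0, and suppose |Sᵢⱼ| ≤ λ for all i ≠ j. Then the diagonal matrix Θ̂ with diagonal entries Θ̂ᵢᵢ = 1/Sᵢᵢ and zero off-diagonal entries is positive definite and is a global minimizer of the graphical lasso objective f over the set of positive definite symmetric real n×n matrices. -/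
open Matrix


-- trace = sum of eigenvalues (real case)
lemma trace_eq_sum_eigs_s2 {n : ℕ} {M : Matrix (Fin n) (Fin n) ℝ} (hM : M.IsHermitian) :
    M.trace = ∑ i, hM.eigenvalues i := by
  rw [hM.trace_eq_sum_eigenvalues]
  simp

-- log det ≤ trace - n for PD matrices
lemma log_det_le_trace_s2 {n : ℕ} {M : Matrix (Fin n) (Fin n) ℝ} (hM : M.PosDef) :
    Real.log M.det ≤ M.trace - n := by
  have hev := hM.eigenvalues_pos
  rw [hM.1.det_eq_prod_eigenvalues, trace_eq_sum_eigs_s2 hM.1]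
  simp only [RCLike.ofReal_real_eq_id, id_eq]
  rw [Real.log_prod (fun i _ => (hev i).ne')]
  calc ∑ i, Real.log (hM.1.eigenvalues i)
      ≤ ∑ i, (hM.1.eigenvalues i - 1) :=
        Finset.sum_le_sum fun i _ => Real.log_le_sub_one_of_pos (hev i)
    _ = ∑ i, hM.1.eigenvalues i - n := by
        rw [Finset.sum_sub_distrib]; simp

lemma dtd_posDef {n : ℕ} {Θ : Matrix (Fin n) (Fin n) ℝ} (hΘ : Θ.PosDef)
    {d : Fin n → ℝ} (hd : ∀ i, 0 < d i) :
    (Matrix.diagonal d * Θ * Matrix.diagonal d).PosDef := by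
  set D := Matrix.diagonal d with hD
  have hDh : Dᴴ = D := by
    simp [hD, Matrix.diagonal_conjTranspose]
  rw [Matrix.posDef_iff_dotProduct_mulVec] at hΘ ⊢
  constructor
  · have := Matrix.isHermitian_mul_mul_conjTranspose D hΘ.1
    rwa [hDh] at this
  · intro x hx
    have hDx : D *ᵥ x ≠ 0 := by
      intro h
      apply hx
      funext i
      have := congrFun h i
      simp [hD, Matrix.mulVec_diagonal] at this
      rcases this with h1 | h1
      · exact absurd h1 (hd i).ne'
      · exact h1
    have := hΘ.2 (x := D *ᵥ x) hDx
    have heq : star x ⬝ᵥ ((D * Θ * D) *ᵥ x) = star (D *ᵥ x) ⬝ᵥ (Θ *ᵥ (D *ᵥ x)) := by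
      rw [← Matrix.mulVec_mulVec, ← Matrix.mulVec_mulVec, Matrix.dotProduct_mulVec]
      congr 1
      funext i
      simp [hD, Matrix.vecMul_diagonal, Matrix.mulVec_diagonal, mul_comm]
    rw [heq]
    exact this

lemma key_ineq {n : ℕ} (S : Matrix (Fin n) (Fin n) ℝ) (hSdiag : ∀ i, 0 < S i i)
    {Θ : Matrix (Fin n) (Fin n) ℝ} (hΘ : Θ.PosDef) :
    (n : ℝ) + ∑ i, Real.log (S i i) ≤ ∑ i, S i i * Θ i i - Real.log Θ.det := by
  set d : Fin n → ℝ := fun i => Real.sqrt (S i i) with hd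
  have hdpos : ∀ i, 0 < d i := fun i => Real.sqrt_pos.mpr (hSdiag i)
  have hM := dtd_posDef hΘ hdpos
  have hle := log_det_le_trace_s2 hM
  have hdet : (Matrix.diagonal d * Θ * Matrix.diagonal d).det
      = (∏ i, S i i) * Θ.det := by
    rw [Matrix.det_mul, Matrix.det_mul, Matrix.det_diagonal]
    rw [mul_comm, ← mul_assoc, ← Finset.prod_mul_distrib]
    congr 1
    exact Finset.prod_congr rfl fun i _ => Real.mul_self_sqrt (hSdiag i).le
  have htr : (Matrix.diagonal d * Θ * Matrix.diagonal d).trace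
      = ∑ i, S i i * Θ i i := by
    have h2 : ∀ i, (Matrix.diagonal d * Θ * Matrix.diagonal d) i i = S i i * Θ i i := by
      intro i
      rw [Matrix.mul_diagonal, Matrix.diagonal_mul, mul_right_comm, hd,
        Real.mul_self_sqrt (hSdiag i).le]
    simp only [Matrix.trace, Matrix.diag_apply]
    exact Finset.sum_congr rfl fun i _ => h2 i
  rw [hdet, htr] at hle
  have hprodpos : (0:ℝ) < ∏ i, S i i := Finset.prod_pos fun i _ => hSdiag i
  rw [Real.log_mul hprodpos.ne' hΘ.det_pos.ne',
    Real.log_prod (fun i _ => (hSdiag i).ne')] at hle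
  linarith

/-- If `|Sᵢⱼ| ≤ λ` for all `i ≠ j`, then the diagonal matrix with entries
`1/Sᵢᵢ` is positive definite and globally minimizes the graphical lasso
objective over positive definite symmetric matrices. -/
theorem glasso_diagonal_is_minimizer {n : ℕ}
    (S : Matrix (Fin n) (Fin n) ℝ) (hSsym : S.IsSymm)
    (hSdiag : ∀ i, 0 < S i i) (lam : ℝ) (hlam : 0 ≤ lam)
    (hoff : ∀ i j, i ≠ j → |S i j| ≤ lam) :
    (Matrix.diagonal fun i => 1 / S i i).PosDef ∧
    IsMinOn (glassoObj S lam) {Θ : Matrix (Fin n) (Fin n) ℝ | Θ.PosDef}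
      (Matrix.diagonal fun i => 1 / S i i) := by
  have hPD : (Matrix.diagonal fun i => 1 / S i i).PosDef :=
    Matrix.posDef_diagonal_iff.mpr fun i => by have := hSdiag i; positivity
  refine ⟨hPD, ?_⟩
  intro Θ hΘ
  simp only [Set.mem_setOf_eq] at hΘ
  show glassoObj S lam (Matrix.diagonal fun i => 1 / S i i) ≤ glassoObj S lam Θ
  -- value at the diagonal matrix
  have h1 : (S * Matrix.diagonal fun i => 1 / S i i).trace = n := by
    simp only [Matrix.trace, Matrix.diag_apply, Matrix.mul_diagonal]
    have hc : ∀ i ∈ Finset.univ, S i i * (1 / S i i) = 1 := fun i _ => by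
      field_simp [(hSdiag i).ne']
    rw [Finset.sum_congr rfl hc]
    simp
  have h2 : Real.log (Matrix.diagonal fun i => 1 / S i i).det
      = -∑ i, Real.log (S i i) := by
    rw [Matrix.det_diagonal, Real.log_prod (fun i _ => by have := hSdiag i; positivity)]
    simp only [one_div, Real.log_inv]
    rw [Finset.sum_neg_distrib]
  have h3 : ∑ i, ∑ j, (if i ≠ j then |(Matrix.diagonal fun k => 1 / S k k) i j| else 0)
      = 0 := by
    apply Finset.sum_eq_zero; intro i _
    apply Finset.sum_eq_zero; intro j _
    split
    · rw [Matrix.diagonal_apply_ne _ ‹i ≠ j›, abs_zero]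
    · rfl
  have hval : glassoObj S lam (Matrix.diagonal fun i => 1 / S i i)
      = n + ∑ i, Real.log (S i i) := by
    unfold glassoObj
    rw [h1, h2, h3]
    ring
  -- symmetry of Θ
  have hsym : ∀ i j, Θ j i = Θ i j := by
    intro i j
    have := congrFun (congrFun hΘ.1 i) j
    simpa using this
  -- lower bound on the trace + penalty part
  have hlow : ∑ i, S i i * Θ i i
      ≤ (S * Θ).trace + lam * ∑ i, ∑ j, (if i ≠ j then |Θ i j| else 0) := by
    have htr : (S * Θ).trace = ∑ i, ∑ j, S i j * Θ j i := by
      simp [Matrix.trace, Matrix.mul_apply]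
    rw [htr, Finset.mul_sum, ← Finset.sum_add_distrib]
    have hstep : ∀ i, S i i * Θ i i
        ≤ ∑ j, S i j * Θ j i + lam * ∑ j, (if i ≠ j then |Θ i j| else 0) := by
      intro i
      rw [Finset.mul_sum, ← Finset.sum_add_distrib]
      have : S i i * Θ i i = ∑ j, (if j = i then S i i * Θ i i else 0) := by
        rw [Finset.sum_ite_eq']; simp
      rw [this]
      apply Finset.sum_le_sum
      intro j _
      by_cases h : i = j
      · subst h; simp
      · rw [if_neg (fun hj : j = i => h hj.symm), if_pos h]
        have hb : |S i j * Θ j i| ≤ lam * |Θ i j| := by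
          rw [hsym j i, abs_mul]
          exact mul_le_mul_of_nonneg_right (hoff i j h) (abs_nonneg _)
        have := neg_abs_le (S i j * Θ j i)
        linarith
    exact Finset.sum_le_sum fun i _ => hstep i
  have hkey := key_ineq S hSdiag hΘ
  rw [hval]
  unfold glassoObj
  linarith
end

section
/- Let S be a symmetric real n×n matrix with strictly positive diagonal entries and let λ > u_λ, where u_λ = max_{i≠j} |Sᵢⱼ|. Then the diagonal matrix with diagonal entries 1/Sᵢᵢ is the unique minimizer of the graphical lasso objective f over the set of positive definite symmetric real n×n matrices; in particular every minimizer has all off-diagonal entries equal to zero, i.e. the estimated graph is empty. -/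
open Matrix

namespace GlassoAux

variable {n : ℕ}

lemma trace_eq_sum_eigs {A : Matrix (Fin n) (Fin n) ℝ} (hA : A.IsHermitian) :
    A.trace = ∑ i, hA.eigenvalues i := by
  rw [hA.trace_eq_sum_eigenvalues]
  simp

lemma log_det_le_trace_sub {M : Matrix (Fin n) (Fin n) ℝ} (hM : M.PosDef) :
    Real.log M.det ≤ M.trace - n := by
  have hev := hM.eigenvalues_pos
  have hdet : M.det = ∏ i, hM.isHermitian.eigenvalues i := by
    rw [hM.isHermitian.det_eq_prod_eigenvalues]; simp
  rw [hdet, trace_eq_sum_eigs hM.isHermitian,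
    Real.log_prod (fun i _ => (hev i).ne')]
  calc ∑ i, Real.log (hM.isHermitian.eigenvalues i)
      ≤ ∑ i, (hM.isHermitian.eigenvalues i - 1) :=
        Finset.sum_le_sum fun i _ => Real.log_le_sub_one_of_pos (hev i)
    _ = ∑ i, hM.isHermitian.eigenvalues i - n := by
        rw [Finset.sum_sub_distrib]; simp

lemma diag_pos_of_posDef {Θ : Matrix (Fin n) (Fin n) ℝ} (hΘ : Θ.PosDef) (i : Fin n) :
    0 < Θ i i := by
  exact hΘ.diag_pos

lemma posDef_diag_mul_mul {d : Fin n → ℝ} (hd : ∀ i, d i ≠ 0)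
    {Θ : Matrix (Fin n) (Fin n) ℝ} (hΘ : Θ.PosDef) :
    (Matrix.diagonal d * Θ * Matrix.diagonal d).PosDef := by
  refine Matrix.PosDef.of_dotProduct_mulVec_pos ?_ ?_
  · unfold Matrix.IsHermitian
    simp only [Matrix.conjTranspose_mul, Matrix.diagonal_conjTranspose, star_trivial,
      Pi.star_def]
    rw [hΘ.1.eq, Matrix.mul_assoc]
  · intro x hx
    have hDx : (Matrix.diagonal d) *ᵥ x ≠ 0 := by
      obtain ⟨i, hi⟩ := Function.ne_iff.mp hx
      rw [Function.ne_iff]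
      exact ⟨i, by simp [Matrix.mulVec_diagonal]; exact ⟨hd i, hi⟩⟩
    have key : star x ⬝ᵥ (Matrix.diagonal d * Θ * Matrix.diagonal d) *ᵥ x
        = star ((Matrix.diagonal d) *ᵥ x) ⬝ᵥ Θ *ᵥ ((Matrix.diagonal d) *ᵥ x) := by
      simp only [star_trivial, ← Matrix.mulVec_mulVec]
      rw [Matrix.dotProduct_mulVec x (Matrix.diagonal d)]
      congr 1
      ext j
      simp [Matrix.vecMul_diagonal, Matrix.mulVec_diagonal, mul_comm]
    rw [key]
    exact hΘ.dotProduct_mulVec_pos hDx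

/-- Value of the objective on a diagonal matrix with positive entries. -/
lemma glassoObj_diagonal (S : Matrix (Fin n) (Fin n) ℝ) (lam : ℝ) {v : Fin n → ℝ}
    (hv : ∀ i, 0 < v i) :
    glassoObj S lam (Matrix.diagonal v) = ∑ i, (S i i * v i - Real.log (v i)) := by
  have h1 : (S * Matrix.diagonal v).trace = ∑ i, S i i * v i := by
    simp [Matrix.trace, Matrix.diag, Matrix.mul_diagonal]
  have h2 : Real.log (Matrix.diagonal v).det = ∑ i, Real.log (v i) := by
    rw [Matrix.det_diagonal, Real.log_prod (fun i _ => (hv i).ne')]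
  have h3 : ∑ i, ∑ j, (if i ≠ j then |Matrix.diagonal v i j| else 0) = (0 : ℝ) := by
    apply Finset.sum_eq_zero; intro i _
    apply Finset.sum_eq_zero; intro j _
    by_cases h : i = j <;> simp [h, Matrix.diagonal_apply_ne]
  rw [glassoObj, h1, h2, h3, mul_zero, add_zero, Finset.sum_sub_distrib]

/-- The key inequality. -/
lemma key_ineq (S : Matrix (Fin n) (Fin n) ℝ) (lam ulam : ℝ)
    (hSdiag : ∀ i, 0 < S i i)
    (hub : ∀ i j : Fin n, i ≠ j → |S i j| ≤ ulam)
    {Θ : Matrix (Fin n) (Fin n) ℝ} (hΘ : Θ.PosDef) :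
    (n : ℝ) + ∑ i, Real.log (S i i)
      + (lam - ulam) * (∑ i, ∑ j, if i ≠ j then |Θ i j| else 0)
      ≤ glassoObj S lam Θ := by
  set P : ℝ := ∑ i, ∑ j, if i ≠ j then |Θ i j| else 0 with hP
  set s : Fin n → ℝ := fun i => Real.sqrt (S i i) with hs
  have hs_pos : ∀ i, 0 < s i := fun i => Real.sqrt_pos.mpr (hSdiag i)
  have hM : (Matrix.diagonal s * Θ * Matrix.diagonal s).PosDef :=
    posDef_diag_mul_mul (fun i => (hs_pos i).ne') hΘ
  -- trace of the congruent matrix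
  have htr : (Matrix.diagonal s * Θ * Matrix.diagonal s).trace = ∑ i, S i i * Θ i i := by
    simp only [Matrix.trace, Matrix.diag, Matrix.mul_diagonal, Matrix.diagonal_mul]
    apply Finset.sum_congr rfl
    intro i _
    rw [mul_comm (s i * Θ i i) (s i), ← mul_assoc, Real.mul_self_sqrt (hSdiag i).le]
  -- determinant of the congruent matrix
  have hdet : (Matrix.diagonal s * Θ * Matrix.diagonal s).det = (∏ i, S i i) * Θ.det := by
    rw [Matrix.det_mul, Matrix.det_mul, Matrix.det_diagonal]
    rw [mul_comm ((∏ i, s i) * Θ.det) (∏ i, s i), ← mul_assoc, ← Finset.prod_mul_distrib]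
    congr 1
    exact Finset.prod_congr rfl fun i _ => Real.mul_self_sqrt (hSdiag i).le
  have hprodpos : 0 < ∏ i, S i i := Finset.prod_pos fun i _ => hSdiag i
  have hlog : Real.log ((∏ i, S i i) * Θ.det)
      = ∑ i, Real.log (S i i) + Real.log Θ.det := by
    rw [Real.log_mul hprodpos.ne' hΘ.det_pos.ne',
      Real.log_prod (fun i _ => (hSdiag i).ne')]
  -- (A):  ∑ log S i i + log det Θ ≤ ∑ S i i * Θ i i − n
  have hA : ∑ i, Real.log (S i i) + Real.log Θ.det ≤ ∑ i, S i i * Θ i i - n := by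
    have := log_det_le_trace_sub hM
    rwa [htr, hdet, hlog] at this
  -- trace lower bound
  have hQ : ∑ i, ∑ j, (if i ≠ j then |Θ j i| else 0) = P := by
    rw [hP, Finset.sum_comm]
    apply Finset.sum_congr rfl; intro i _
    apply Finset.sum_congr rfl; intro j _
    simp [ne_comm]
  have htrace_lb : ∑ i, S i i * Θ i i - ulam * P ≤ (S * Θ).trace := by
    have hexp : (S * Θ).trace = ∑ i, ∑ j, S i j * Θ j i := by
      simp [Matrix.trace, Matrix.diag, Matrix.mul_apply]
    have hterm : ∀ i j : Fin n,
        (if i = j then S i i * Θ i i else 0) - ulam * (if i ≠ j then |Θ j i| else 0)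
          ≤ S i j * Θ j i := by
      intro i j
      by_cases h : i = j
      · subst h; simp
      · simp only [if_neg h, if_pos h, zero_sub, ne_eq, not_false_iff]
        have h1 : |S i j| ≤ ulam := hub i j h
        have h2 : -(|S i j| * |Θ j i|) ≤ S i j * Θ j i := by
          rw [← abs_mul]; exact neg_abs_le _
        nlinarith [abs_nonneg (Θ j i), abs_nonneg (S i j)]
    have hsum : ∑ i, ∑ j, ((if i = j then S i i * Θ i i else 0)
        - ulam * (if i ≠ j then |Θ j i| else 0)) ≤ ∑ i, ∑ j, S i j * Θ j i :=
      Finset.sum_le_sum fun i _ => Finset.sum_le_sum fun j _ => hterm i j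
    have hsplit : ∑ i, ∑ j, ((if i = j then S i i * Θ i i else 0)
        - ulam * (if i ≠ j then |Θ j i| else 0))
        = ∑ i, S i i * Θ i i - ulam * P := by
      rw [← hQ]
      rw [show ∀ (f g : Fin n → Fin n → ℝ), ∑ i, ∑ j, (f i j - g i j)
          = ∑ i, ∑ j, f i j - ∑ i, ∑ j, g i j from fun f g => by
        simp [Finset.sum_sub_distrib]]
      congr 1
      · apply Finset.sum_congr rfl; intro i _
        simp
      · rw [Finset.mul_sum]
        apply Finset.sum_congr rfl; intro i _
        rw [Finset.mul_sum]
    rw [hexp]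
    rw [← hsplit]
    exact hsum
  -- put it together
  rw [glassoObj, ← hP]
  linarith [hA, htrace_lb]

/-- elementary scalar inequality -/
lemma scalar_ineq {a x : ℝ} (ha : 0 < a) (hx : 0 < x) :
    1 + Real.log a ≤ a * x - Real.log x := by
  have h := Real.log_le_sub_one_of_pos (mul_pos ha hx)
  rw [Real.log_mul ha.ne' hx.ne'] at h
  linarith

lemma scalar_ineq_strict {a x : ℝ} (ha : 0 < a) (hx : 0 < x) (hne : x ≠ 1 / a) :
    1 + Real.log a < a * x - Real.log x := by
  have hax : a * x ≠ 1 := by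
    intro h
    apply hne
    field_simp
    linarith [h]
  have h := Real.log_lt_sub_one_of_pos (mul_pos ha hx) hax
  rw [Real.log_mul ha.ne' hx.ne'] at h
  linarith

end GlassoAux

/-- If `λ > u_λ = max_{i≠j} |Sᵢⱼ|`, then the diagonal matrix with diagonal
entries `1/Sᵢᵢ` is the unique minimizer of the graphical lasso objective over
positive definite symmetric matrices; in particular every minimizer has all
off-diagonal entries zero, i.e. the estimated graph is empty. -/
theorem glasso_empty_graph {n : ℕ} (hn : 2 ≤ n)
    (S : Matrix (Fin n) (Fin n) ℝ) (hSsym : S.IsSymm)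
    (hSdiag : ∀ i, 0 < S i i) (lam ulam : ℝ)
    (hulam : IsGreatest {x : ℝ | ∃ i j : Fin n, i ≠ j ∧ x = |S i j|} ulam)
    (hlam : ulam < lam) :
    (Matrix.diagonal fun i => 1 / S i i).PosDef ∧
    IsMinOn (glassoObj S lam) {Θ : Matrix (Fin n) (Fin n) ℝ | Θ.PosDef}
      (Matrix.diagonal fun i => 1 / S i i) ∧
    (∀ Θ : Matrix (Fin n) (Fin n) ℝ, Θ.PosDef →
      IsMinOn (glassoObj S lam) {Θ' : Matrix (Fin n) (Fin n) ℝ | Θ'.PosDef} Θ →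
      Θ = Matrix.diagonal fun i => 1 / S i i) ∧
    (∀ Θ : Matrix (Fin n) (Fin n) ℝ, Θ.PosDef →
      IsMinOn (glassoObj S lam) {Θ' : Matrix (Fin n) (Fin n) ℝ | Θ'.PosDef} Θ →
      ∀ i j, i ≠ j → Θ i j = 0) := by
  obtain ⟨⟨i0, j0, hij0, hueq⟩, hub'⟩ := hulam
  have hub : ∀ i j : Fin n, i ≠ j → |S i j| ≤ ulam := fun i j h => hub' ⟨i, j, h, rfl⟩
  have hulam_nonneg : 0 ≤ ulam := hueq ▸ abs_nonneg _
  have hvpos : ∀ i, 0 < 1 / S i i := fun i => by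
    have := hSdiag i; positivity
  have hPD : (Matrix.diagonal fun i => 1 / S i i).PosDef := Matrix.PosDef.diagonal hvpos
  have hval : glassoObj S lam (Matrix.diagonal fun i => 1 / S i i)
      = ∑ i, (1 + Real.log (S i i)) := by
    rw [GlassoAux.glassoObj_diagonal S lam hvpos]
    apply Finset.sum_congr rfl; intro i _
    rw [one_div, Real.log_inv]
    have := (hSdiag i).ne'
    field_simp
    ring
  have hvalsum : ∑ i, (1 + Real.log (S i i)) = (n : ℝ) + ∑ i, Real.log (S i i) := by
    rw [Finset.sum_add_distrib]; simp
  have hmin : IsMinOn (glassoObj S lam) {Θ : Matrix (Fin n) (Fin n) ℝ | Θ.PosDef}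
      (Matrix.diagonal fun i => 1 / S i i) := by
    rw [isMinOn_iff]
    intro Θ hΘ
    simp only [Set.mem_setOf_eq] at hΘ
    have hk := GlassoAux.key_ineq S lam ulam hSdiag hub hΘ
    have hPnn : 0 ≤ ∑ i, ∑ j, if i ≠ j then |Θ i j| else 0 :=
      Finset.sum_nonneg fun i _ => Finset.sum_nonneg fun j _ => by positivity
    rw [hval, hvalsum]
    nlinarith
  have hoff : ∀ Θ : Matrix (Fin n) (Fin n) ℝ, Θ.PosDef →
      IsMinOn (glassoObj S lam) {Θ' : Matrix (Fin n) (Fin n) ℝ | Θ'.PosDef} Θ →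
      ∀ i j, i ≠ j → Θ i j = 0 := by
    intro Θ hΘ hminΘ i j hij
    have hle : glassoObj S lam Θ ≤ glassoObj S lam (Matrix.diagonal fun i => 1 / S i i) :=
      isMinOn_iff.mp hminΘ _ hPD
    have hk := GlassoAux.key_ineq S lam ulam hSdiag hub hΘ
    have hPnn : ∀ i' ∈ Finset.univ, (0:ℝ) ≤ ∑ j', if i' ≠ j' then |Θ i' j'| else 0 :=
      fun i' _ => Finset.sum_nonneg fun j' _ => by positivity
    have hP0 : ∑ i', ∑ j', (if i' ≠ j' then |Θ i' j'| else 0) = 0 := by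
      have h1 : 0 ≤ ∑ i', ∑ j', (if i' ≠ j' then |Θ i' j'| else 0) :=
        Finset.sum_nonneg hPnn
      have h2 : ∑ i', ∑ j', (if i' ≠ j' then |Θ i' j'| else (0:ℝ)) ≤ 0 := by
        rw [hval, hvalsum] at hle
        nlinarith
      linarith
    have hrow := (Finset.sum_eq_zero_iff_of_nonneg hPnn).mp hP0 i (Finset.mem_univ i)
    have hentry := (Finset.sum_eq_zero_iff_of_nonneg
      (fun j' _ => by positivity : ∀ j' ∈ Finset.univ,
        (0:ℝ) ≤ if i ≠ j' then |Θ i j'| else 0)).mp hrow j (Finset.mem_univ j)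
    rw [if_pos hij] at hentry
    exact abs_eq_zero.mp hentry
  refine ⟨hPD, hmin, ?_, hoff⟩
  intro Θ hΘ hminΘ
  have hdz := hoff Θ hΘ hminΘ
  have hvΘ : ∀ i, 0 < Θ i i := GlassoAux.diag_pos_of_posDef hΘ
  have hΘdiag : Θ = Matrix.diagonal (fun i => Θ i i) := by
    ext i j
    by_cases h : i = j
    · subst h; simp
    · rw [hdz i j h, Matrix.diagonal_apply_ne _ h]
  have hval2 : glassoObj S lam Θ = ∑ i, (S i i * Θ i i - Real.log (Θ i i)) := by
    conv_lhs => rw [hΘdiag]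
    exact GlassoAux.glassoObj_diagonal S lam hvΘ
  have hle : glassoObj S lam Θ ≤ glassoObj S lam (Matrix.diagonal fun i => 1 / S i i) :=
    isMinOn_iff.mp hminΘ _ hPD
  have hkey : ∀ i, Θ i i = 1 / S i i := by
    by_contra hc
    push_neg at hc
    obtain ⟨k, hk⟩ := hc
    have hstrict : ∑ i, (1 + Real.log (S i i)) < ∑ i, (S i i * Θ i i - Real.log (Θ i i)) :=
      Finset.sum_lt_sum (fun i _ => GlassoAux.scalar_ineq (hSdiag i) (hvΘ i))
        ⟨k, Finset.mem_univ k, GlassoAux.scalar_ineq_strict (hSdiag k) (hvΘ k) hk⟩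
    rw [hval2, hval] at hle
    linarith
  ext i j
  by_cases h : i = j
  · subst h; rw [Matrix.diagonal_apply_eq]; exact hkey i
  · rw [hdz i j h, Matrix.diagonal_apply_ne _ h]
end

section
/- Let S be a symmetric real n×n matrix and λ ≥ 0. The graphical lasso objective f(Θ) = trace(S·Θ) − log det Θ + λ·∑_{i≠j} |Θᵢⱼ| is convex on the set of positive definite symmetric real n×n matrices: for all positive definite symmetric A, B and all t ∈ [0,1], f(t·A + (1−t)·B) ≤ t·f(A) + (1−t)·f(B). -/
open Matrix

open scoped MatrixOrder

/-- Concavity of `log ∘ det` on positive definite real matrices. -/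
lemma logdet_concave_aux {n : ℕ} {A B : Matrix (Fin n) (Fin n) ℝ}
    (hA : A.PosDef) (hB : B.PosDef) {t : ℝ} (ht0 : 0 ≤ t) (ht1 : t ≤ 1) :
    t * Real.log A.det + (1 - t) * Real.log B.det
      ≤ Real.log (t • A + (1 - t) • B).det := by
  classical
  set A1 := CFC.sqrt A with hA1def
  have hA1psd : A1.PosSemidef := (CFC.sqrt_nonneg A).posSemidef
  have hA1herm : A1.IsHermitian := hA1psd.isHermitian
  have hA1sq : A1 * A1 = A := CFC.sqrt_mul_sqrt_self A hA.posSemidef.nonneg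
  have hdetA : 0 < A.det := hA.det_pos
  have hdetA1sq : A1.det * A1.det = A.det := by rw [← det_mul, hA1sq]
  have hdetA1 : A1.det ≠ 0 := by
    intro h
    rw [h, zero_mul] at hdetA1sq
    exact hdetA.ne' hdetA1sq.symm
  set M := A1⁻¹ with hMdef
  have hAM : A1 * M = 1 := mul_nonsing_inv _ hdetA1.isUnit
  have hMA : M * A1 = 1 := nonsing_inv_mul _ hdetA1.isUnit
  have hMherm : M.IsHermitian := hA1herm.inv
  set C := M * B * M with hCdef
  have hCpsd : C.PosSemidef := by
    have := hB.posSemidef.conjTranspose_mul_mul_same M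
    rwa [hMherm.eq] at this
  have hdetM : M.det = (A1.det)⁻¹ := by
    rw [hMdef, det_nonsing_inv, Ring.inverse_eq_inv]
  have hdetC : C.det = B.det / A.det := by
    rw [hCdef, det_mul, det_mul, hdetM, ← hdetA1sq]
    field_simp
  have hdetCpos : 0 < C.det := by
    rw [hdetC]; exact div_pos hB.det_pos hdetA
  have hCpd : C.PosDef := by
    refine Matrix.PosDef.of_dotProduct_mulVec_pos hCpsd.isHermitian fun x hx => ?_
    refine lt_of_le_of_ne (hCpsd.dotProduct_mulVec_nonneg x) fun h => hx ?_
    have h0 : C *ᵥ x = 0 := (hCpsd.dotProduct_mulVec_zero_iff x).1 h.symm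
    have hCunit : IsUnit C := (isUnit_iff_isUnit_det _).2 hdetCpos.ne'.isUnit
    have hinj := mulVec_injective_iff_isUnit.mpr hCunit
    exact hinj (by rw [h0, mulVec_zero])
  have hB' : A1 * C * A1 = B := by
    rw [hCdef]
    rw [show A1 * (M * B * M) * A1 = (A1 * M) * B * (M * A1) by
      simp only [mul_assoc]]
    rw [hAM, hMA, one_mul, mul_one]
  have hdecomp : t • A + (1 - t) • B
      = A1 * (t • (1 : Matrix (Fin n) (Fin n) ℝ) + (1 - t) • C) * A1 := by
    rw [mul_add, add_mul, Matrix.mul_smul, Matrix.mul_smul, Matrix.smul_mul, Matrix.smul_mul,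
      Matrix.mul_one, hA1sq, hB']
  set μ := hCpd.isHermitian.eigenvalues with hμdef
  have hμpos : ∀ i, 0 < μ i := hCpd.eigenvalues_pos
  have hpos_i : ∀ i, 0 < t + (1 - t) * μ i := by
    intro i
    rcases eq_or_lt_of_le ht0 with h | h
    · rw [← h]
      simpa using hμpos i
    · exact add_pos_of_pos_of_nonneg h (mul_nonneg (by linarith) (hμpos i).le)
  have hUU : (hCpd.isHermitian.eigenvectorUnitary : Matrix (Fin n) (Fin n) ℝ)
      * star (hCpd.isHermitian.eigenvectorUnitary : Matrix (Fin n) (Fin n) ℝ) = 1 :=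
    Matrix.mem_unitaryGroup_iff.mp (hCpd.isHermitian.eigenvectorUnitary).2
  have hspec : C = (hCpd.isHermitian.eigenvectorUnitary : Matrix (Fin n) (Fin n) ℝ)
      * diagonal (RCLike.ofReal ∘ μ)
      * star (hCpd.isHermitian.eigenvectorUnitary : Matrix (Fin n) (Fin n) ℝ) :=
    hCpd.isHermitian.spectral_theorem
  have hD : t • (1 : Matrix (Fin n) (Fin n) ℝ) + (1 - t) • C
      = (hCpd.isHermitian.eigenvectorUnitary : Matrix (Fin n) (Fin n) ℝ)
      * diagonal (fun i => t + (1 - t) * μ i)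
      * star (hCpd.isHermitian.eigenvectorUnitary : Matrix (Fin n) (Fin n) ℝ) := by
    have h1 : (diagonal (fun i => t + (1 - t) * μ i) : Matrix (Fin n) (Fin n) ℝ)
        = t • (1 : Matrix (Fin n) (Fin n) ℝ) + (1 - t) • diagonal (RCLike.ofReal ∘ μ) := by
      ext i j
      by_cases h : i = j <;>
        simp [Matrix.diagonal_apply, Matrix.one_apply, h, RCLike.ofReal_real_eq_id]
    rw [h1, mul_add, add_mul, Matrix.mul_smul, Matrix.mul_smul, Matrix.smul_mul,
      Matrix.smul_mul, Matrix.mul_one, hUU, ← hspec]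
  have hdetD : (t • (1 : Matrix (Fin n) (Fin n) ℝ) + (1 - t) • C).det
      = ∏ i, (t + (1 - t) * μ i) := by
    rw [hD, det_mul_right_comm, hUU, one_mul, det_diagonal]
  have hdet_eq : (t • A + (1 - t) • B).det = A.det * ∏ i, (t + (1 - t) * μ i) := by
    rw [hdecomp, det_mul, det_mul, hdetD,
      show A1.det * (∏ i, (t + (1 - t) * μ i)) * A1.det
        = (A1.det * A1.det) * ∏ i, (t + (1 - t) * μ i) from by ring, hdetA1sq]
  have hprodpos : 0 < ∏ i, (t + (1 - t) * μ i) :=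
    Finset.prod_pos fun i _ => hpos_i i
  have hlogdet : Real.log (t • A + (1 - t) • B).det
      = Real.log A.det + ∑ i, Real.log (t + (1 - t) * μ i) := by
    rw [hdet_eq, Real.log_mul hdetA.ne' hprodpos.ne', Real.log_prod]
    intro i _
    exact (hpos_i i).ne'
  have hconc : ∀ i, (1 - t) * Real.log (μ i) ≤ Real.log (t + (1 - t) * μ i) := by
    intro i
    have hb : (0:ℝ) ≤ 1 - t := by linarith
    have hab : t + (1 - t) = 1 := by ring
    have h := strictConcaveOn_log_Ioi.concaveOn.2 (Set.mem_Ioi.mpr one_pos)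
      (Set.mem_Ioi.mpr (hμpos i)) ht0 hb hab
    simpa [Real.log_one] using h
  have hlogC : Real.log C.det = ∑ i, Real.log (μ i) := by
    rw [hCpd.isHermitian.det_eq_prod_eigenvalues, Real.log_prod]
    · simp; rfl
    · intro i _
      simpa using (hμpos i).ne'
  have hsum : (1 - t) * Real.log C.det ≤ ∑ i, Real.log (t + (1 - t) * μ i) := by
    rw [hlogC, Finset.mul_sum]
    exact Finset.sum_le_sum fun i _ => hconc i
  have hlogC2 : Real.log C.det = Real.log B.det - Real.log A.det := by
    rw [hdetC, Real.log_div hB.det_pos.ne' hdetA.ne']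
  have hsum2 : (1 - t) * (Real.log B.det - Real.log A.det)
      ≤ ∑ i, Real.log (t + (1 - t) * μ i) := by
    rw [← hlogC2]; exact hsum
  have key : t * Real.log A.det + (1 - t) * Real.log B.det
      = Real.log A.det + (1 - t) * (Real.log B.det - Real.log A.det) := by ring
  rw [hlogdet, key]
  linarith

/-- The graphical lasso objective is convex on the set of positive definite
symmetric real `n×n` matrices. -/
theorem glassoObj_convex {n : ℕ}
    (S : Matrix (Fin n) (Fin n) ℝ) (hSsym : S.IsSymm) (lam : ℝ) (hlam : 0 ≤ lam) :
    ∀ A B : Matrix (Fin n) (Fin n) ℝ, A.PosDef → B.PosDef →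
      ∀ t : ℝ, 0 ≤ t → t ≤ 1 →
        glassoObj S lam (t • A + (1 - t) • B)
          ≤ t * glassoObj S lam A + (1 - t) * glassoObj S lam B := by
  intro A B hA hB t ht0 ht1
  have h1 : (S * (t • A + (1 - t) • B)).trace
      = t * (S * A).trace + (1 - t) * (S * B).trace := by
    rw [mul_add, Matrix.mul_smul, Matrix.mul_smul, trace_add, trace_smul, trace_smul]
    simp [smul_eq_mul]
  have h2 := logdet_concave_aux hA hB ht0 ht1
  have h3 : (∑ i, ∑ j, if i ≠ j then |(t • A + (1 - t) • B) i j| else 0)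
      ≤ t * (∑ i, ∑ j, if i ≠ j then |A i j| else 0)
        + (1 - t) * (∑ i, ∑ j, if i ≠ j then |B i j| else 0) := by
    rw [Finset.mul_sum, Finset.mul_sum, ← Finset.sum_add_distrib]
    refine Finset.sum_le_sum fun i _ => ?_
    rw [Finset.mul_sum, Finset.mul_sum, ← Finset.sum_add_distrib]
    refine Finset.sum_le_sum fun j _ => ?_
    by_cases hij : i = j
    · simp [hij]
    · rw [if_pos hij, if_pos hij, if_pos hij]
      simp only [Matrix.add_apply, Matrix.smul_apply, smul_eq_mul]
      calc |t * A i j + (1 - t) * B i j| ≤ |t * A i j| + |(1 - t) * B i j| := abs_add_le _ _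
        _ = t * |A i j| + (1 - t) * |B i j| := by
            have h1t : (0:ℝ) ≤ 1 - t := by linarith
            rw [abs_mul, abs_mul, abs_of_nonneg ht0, abs_of_nonneg h1t]
  have h3' : lam * (∑ i, ∑ j, if i ≠ j then |(t • A + (1 - t) • B) i j| else 0)
      ≤ t * (lam * ∑ i, ∑ j, if i ≠ j then |A i j| else 0)
        + (1 - t) * (lam * ∑ i, ∑ j, if i ≠ j then |B i j| else 0) := by
    calc lam * (∑ i, ∑ j, if i ≠ j then |(t • A + (1 - t) • B) i j| else 0)
        ≤ lam * (t * (∑ i, ∑ j, if i ≠ j then |A i j| else 0)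
            + (1 - t) * (∑ i, ∑ j, if i ≠ j then |B i j| else 0)) :=
          mul_le_mul_of_nonneg_left h3 hlam
      _ = t * (lam * ∑ i, ∑ j, if i ≠ j then |A i j| else 0)
            + (1 - t) * (lam * ∑ i, ∑ j, if i ≠ j then |B i j| else 0) := by ring
  have expand : t * glassoObj S lam A + (1 - t) * glassoObj S lam B
      = (t * (S * A).trace + (1 - t) * (S * B).trace)
        - (t * Real.log A.det + (1 - t) * Real.log B.det)
        + (t * (lam * ∑ i, ∑ j, if i ≠ j then |A i j| else 0)
            + (1 - t) * (lam * ∑ i, ∑ j, if i ≠ j then |B i j| else 0)) := by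
    simp only [glassoObj]; ring
  rw [expand]
  simp only [glassoObj]
  linarith [h1, h2, h3']
end
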